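/- For k, n ∈ ℤ, let I(k,n) = ∫_{4k−1}^{4k+1} ∫_{4n+1}^{4n+3} (u² + v²)^{−3/2} du dv. Then Σ_{n∈ℤ} I(0,n) = 4 · Σ_{m=0}^∞ (−1)^m · ( sqrt(1 + 1/(2m+1)²) − 1 ). -/

import Mathlib

open Real MeasureTheory

lemma rpow_neg_three_half (x : ℝ) (hx : 0 < x) :
    x ^ (-(3/2 : ℝ)) = 1 / (Real.sqrt x ^ 3) := by
  have h3 : Real.sqrt x ^ 3 = x ^ (3/2 : ℝ) := by
    rw [Real.sqrt_eq_rpow, ← Real.rpow_natCast (x ^ (1/2:ℝ)) 3, ← Real.rpow_mul hx.le]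
    norm_num
  rw [h3, Real.rpow_neg hx.le, one_div]

lemma hasDerivAt_F (v : ℝ) (hv : v ≠ 0) (u : ℝ) :
    HasDerivAt (fun u : ℝ => u / (v^2 * Real.sqrt (u^2 + v^2)))
      ((u^2 + v^2) ^ (-(3/2 : ℝ))) u := by
  have hx : 0 < u^2 + v^2 := by positivity
  have hs : 0 < Real.sqrt (u^2 + v^2) := Real.sqrt_pos.mpr hx
  have h1 : HasDerivAt (fun u : ℝ => u^2 + v^2) (2*u) u := by
    simpa using (hasDerivAt_pow 2 u).add_const (v^2)
  have h2 : HasDerivAt (fun u : ℝ => Real.sqrt (u^2 + v^2))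
      (u / Real.sqrt (u^2+v^2)) u := by
    have := (Real.hasDerivAt_sqrt (ne_of_gt hx)).comp u h1
    refine this.congr_deriv ?_
    field_simp
  have h3 : HasDerivAt (fun u : ℝ => v^2 * Real.sqrt (u^2 + v^2))
      (v^2 * (u / Real.sqrt (u^2+v^2))) u := h2.const_mul _
  have h4 := (hasDerivAt_id u).div h3 (by positivity)
  refine h4.congr_deriv ?_
  symm
  simp only [id]
  rw [rpow_neg_three_half _ hx]
  have hsq : Real.sqrt (u^2+v^2) ^ 2 = u^2 + v^2 := Real.sq_sqrt hx.le
  field_simp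
  linear_combination (-1) * hsq

lemma inner_int (v : ℝ) (hv : 1 ≤ v^2) :
    ∫ u in Set.Icc (-1:ℝ) 1, ((u^2 + v^2) ^ (-(3/2:ℝ)) : ℝ)
      = 2 / (v^2 * Real.sqrt (1 + v^2)) := by
  have hv0 : v ≠ 0 := by intro h; rw [h] at hv; norm_num at hv
  have hpos : 0 < v^2 := by positivity
  have hs : 0 < Real.sqrt (1 + v^2) := Real.sqrt_pos.mpr (by positivity)
  rw [MeasureTheory.integral_Icc_eq_integral_Ioc,
    ← intervalIntegral.integral_of_le (by norm_num : (-1:ℝ) ≤ 1)]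
  rw [intervalIntegral.integral_eq_sub_of_hasDerivAt
    (fun u _ => hasDerivAt_F v hv0 u) ?_]
  · norm_num
    field_simp
    ring
  · apply ContinuousOn.intervalIntegrable
    apply ContinuousOn.rpow_const
    · exact (((continuous_pow 2).add continuous_const).continuousOn)
    · intro x _
      left
      positivity

lemma hasDerivAt_G (v : ℝ) (hv : v ≠ 0) :
    HasDerivAt (fun v : ℝ => -2 * (Real.sqrt (1 + v^2) / v))
      (2 / (v^2 * Real.sqrt (1 + v^2))) v := by
  have hx : 0 < 1 + v^2 := by positivity
  have hs : 0 < Real.sqrt (1 + v^2) := Real.sqrt_pos.mpr hx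
  have h1 : HasDerivAt (fun v : ℝ => 1 + v^2) (2*v) v := by
    simpa using ((hasDerivAt_pow 2 v).const_add 1)
  have h2 : HasDerivAt (fun v : ℝ => Real.sqrt (1 + v^2))
      (v / Real.sqrt (1 + v^2)) v := by
    have := (Real.hasDerivAt_sqrt (ne_of_gt hx)).comp v h1
    refine this.congr_deriv ?_
    field_simp
  have h4 := (h2.div (hasDerivAt_id v) hv).const_mul (-2 : ℝ)
  refine h4.congr_deriv ?_
  symm
  simp only [id]
  have hsq : Real.sqrt (1+v^2) ^ 2 = 1 + v^2 := Real.sq_sqrt hx.le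
  field_simp
  linear_combination (-1) * hsq

lemma outer_int (a b : ℝ) (hab : a ≤ b) (h : ∀ v ∈ Set.Icc a b, v ≠ 0) :
    ∫ v in Set.Icc a b, 2 / (v^2 * Real.sqrt (1 + v^2))
      = 2 * (Real.sqrt (1+a^2)/a - Real.sqrt (1+b^2)/b) := by
  have huIcc : Set.uIcc a b = Set.Icc a b := Set.uIcc_of_le hab
  rw [MeasureTheory.integral_Icc_eq_integral_Ioc,
    ← intervalIntegral.integral_of_le hab]
  rw [intervalIntegral.integral_eq_sub_of_hasDerivAt
    (fun v hv => hasDerivAt_G v (h v (huIcc ▸ hv))) ?_]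
  · ring
  · apply ContinuousOn.intervalIntegrable
    intro v hv
    have hv0 : v ≠ 0 := h v (huIcc ▸ hv)
    apply ContinuousAt.continuousWithinAt
    have hs : Real.sqrt (1 + v^2) ≠ 0 := by
      have : (0:ℝ) < 1 + v^2 := by positivity
      exact ne_of_gt (Real.sqrt_pos.mpr this)
    apply ContinuousAt.div continuousAt_const
    · exact (continuousAt_pow v 2).mul
        (((continuous_const.add (continuous_pow 2)).sqrt).continuousAt)
    · positivity

/-- `I(k,n)` is the integral of `(u² + v²)^{-3/2}` over the square
`[4k-1, 4k+1] × [4n+1, 4n+3]`. -/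
noncomputable def Ikn (k n : ℤ) : ℝ :=
  ∫ p in Set.Icc ((4 : ℝ) * k - 1) (4 * k + 1) ×ˢ Set.Icc ((4 : ℝ) * n + 1) (4 * n + 3),
    ((p.1 ^ 2 + p.2 ^ 2) ^ (-(3 / 2 : ℝ)) : ℝ) ∂(volume : Measure (ℝ × ℝ))

lemma Ikn_zero (n : ℤ) :
    Ikn 0 n = 2 * (Real.sqrt (1+(4*(n:ℝ)+1)^2)/(4*(n:ℝ)+1)
      - Real.sqrt (1+(4*(n:ℝ)+3)^2)/(4*(n:ℝ)+3)) := by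
  set a : ℝ := 4*(n:ℝ)+1 with ha
  set b : ℝ := 4*(n:ℝ)+3 with hb
  have hab : a ≤ b := by rw [ha, hb]; linarith
  have hv2 : ∀ v ∈ Set.Icc a b, 1 ≤ v^2 := by
    intro v hv
    rcases le_or_gt 0 n with hn | hn
    · have hn' : (0:ℝ) ≤ (n:ℝ) := by exact_mod_cast hn
      have : 1 ≤ v := by have := hv.1; rw [ha] at this; linarith
      nlinarith
    · have hn' : (n:ℝ) ≤ -1 := by
        have : n ≤ -1 := by omega
        exact_mod_cast this
      have : v ≤ -1 := by have := hv.2; rw [hb] at this; linarith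
      nlinarith
  have hv0 : ∀ v ∈ Set.Icc a b, v ≠ 0 := by
    intro v hv h0
    have := hv2 v hv
    rw [h0] at this; norm_num at this
  have hset : Set.Icc ((4:ℝ) * ((0:ℤ):ℝ) - 1) (4 * ((0:ℤ):ℝ) + 1) = Set.Icc (-1:ℝ) 1 := by
    norm_num
  have hcont : ContinuousOn (fun p : ℝ × ℝ => ((p.1 ^ 2 + p.2 ^ 2) ^ (-(3 / 2 : ℝ)) : ℝ))
      (Set.Icc (-1:ℝ) 1 ×ˢ Set.Icc a b) := by
    apply ContinuousOn.rpow_const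
    · exact ((continuous_fst.pow 2).add (continuous_snd.pow 2)).continuousOn
    · intro p hp
      left
      have h1 := hv2 p.2 hp.2
      positivity
  have hint : IntegrableOn (fun p : ℝ × ℝ => ((p.1 ^ 2 + p.2 ^ 2) ^ (-(3 / 2 : ℝ)) : ℝ))
      (Set.Icc (-1:ℝ) 1 ×ˢ Set.Icc a b) volume :=
    hcont.integrableOn_compact (isCompact_Icc.prod isCompact_Icc)
  have step1 : Ikn 0 n = ∫ v in Set.Icc a b, ∫ u in Set.Icc (-1:ℝ) 1,
      ((u ^ 2 + v ^ 2) ^ (-(3 / 2 : ℝ)) : ℝ) := by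
    rw [Ikn]
    push_cast
    rw [show ((4:ℝ) * 0 - 1) = -1 by norm_num, show ((4:ℝ) * 0 + 1) = 1 by norm_num]
    rw [Measure.volume_eq_prod, ← Measure.prod_restrict]
    rw [MeasureTheory.integral_prod_symm]
    rw [Measure.prod_restrict]
    exact hint
  rw [step1]
  have step2 : ∫ v in Set.Icc a b, ∫ u in Set.Icc (-1:ℝ) 1,
      ((u ^ 2 + v ^ 2) ^ (-(3 / 2 : ℝ)) : ℝ)
      = ∫ v in Set.Icc a b, 2 / (v^2 * Real.sqrt (1 + v^2)) := by
    apply MeasureTheory.setIntegral_congr_fun measurableSet_Icc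
    intro v hv
    exact inner_int v (hv2 v hv)
  rw [step2, outer_int a b hab hv0]

lemma g_eq (t : ℝ) (ht : 0 < t) :
    Real.sqrt (1+t^2)/t = Real.sqrt (1+1/t^2) := by
  rw [show (1+1/t^2 : ℝ) = (1+t^2)/t^2 by field_simp; ring,
    Real.sqrt_div (by positivity), Real.sqrt_sq ht.le]

lemma sqrt_one_add_le (x : ℝ) (hx : 0 ≤ x) : Real.sqrt (1+x) ≤ 1 + x/2 := by
  rw [show (1+x/2 : ℝ) = Real.sqrt ((1+x/2)^2) from (Real.sqrt_sq (by linarith)).symm]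
  apply Real.sqrt_le_sqrt
  nlinarith

lemma one_le_sqrt_one_add (x : ℝ) (hx : 0 ≤ x) : 1 ≤ Real.sqrt (1+x) := by
  have h := Real.sqrt_le_sqrt (show (1:ℝ) ≤ 1+x by linarith)
  simpa using h

lemma summable_aux (c : ℝ) (hc : 1 ≤ c) :
    Summable (fun m : ℕ => Real.sqrt (1 + 1/(4*(m:ℝ)+c)^2) - 1) := by
  have base : Summable (fun m : ℕ => 1/((m:ℝ)+1)^2) := by
    have h := (summable_nat_add_iff 1).mpr
      (summable_one_div_nat_pow.mpr (by norm_num : 1 < 2))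
    apply h.congr
    intro m
    push_cast
    ring
  apply Summable.of_nonneg_of_le _ _ base
  · intro m
    have h1 := one_le_sqrt_one_add (1/(4*(m:ℝ)+c)^2) (by positivity)
    linarith
  · intro m
    have hpos : (0:ℝ) < 4*(m:ℝ)+c := by positivity
    have h2 := sqrt_one_add_le (1/(4*(m:ℝ)+c)^2) (by positivity)
    have h3 : ((m:ℝ)+1) ≤ 4*(m:ℝ)+c := by
      have : (0:ℝ) ≤ (m:ℝ) := Nat.cast_nonneg m
      linarith
    have h4 : 1/(4*(m:ℝ)+c)^2 ≤ 1/((m:ℝ)+1)^2 := by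
      apply one_div_le_one_div_of_le (by positivity)
      nlinarith
    have h5 : (0:ℝ) ≤ 1/((m:ℝ)+1)^2 := by positivity
    linarith

lemma g_neg (t : ℝ) (ht : 0 < t) :
    Real.sqrt (1+(-t)^2)/(-t) = -Real.sqrt (1+1/t^2) := by
  rw [neg_sq, div_neg, g_eq t ht]

/-- `Σ_{n ∈ ℤ} I(0,n) = 4 Σ_{m≥0} (-1)^m (√(1 + 1/(2m+1)²) - 1)`. -/
theorem tsum_Ikn_zero_eq :
    ∑' n : ℤ, Ikn 0 n
      = 4 * ∑' m : ℕ, (-1 : ℝ) ^ m *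
          (Real.sqrt (1 + 1 / ((2 * m + 1 : ℝ)) ^ 2) - 1) := by
  obtain ⟨E, hE⟩ := summable_aux 1 le_rfl
  obtain ⟨O, hO⟩ := summable_aux 3 (by norm_num)
  have hnat : HasSum (fun m : ℕ => Ikn 0 (m : ℤ)) (2*(E - O)) := by
    have h := (hE.sub hO).mul_left 2
    have heq : (fun m : ℕ => Ikn 0 (m : ℤ))
        = fun m : ℕ => 2 * ((Real.sqrt (1 + 1/(4*(m:ℝ)+1)^2) - 1)
            - (Real.sqrt (1 + 1/(4*(m:ℝ)+3)^2) - 1)) := by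
      funext m
      rw [Ikn_zero]
      have h1 : (0:ℝ) < 4*(((m:ℤ)):ℝ)+1 := by push_cast; positivity
      have h3 : (0:ℝ) < 4*(((m:ℤ)):ℝ)+3 := by push_cast; positivity
      rw [g_eq _ h1, g_eq _ h3]
      push_cast
      ring
    rw [heq]
    exact h
  have hneg : HasSum (fun m : ℕ => Ikn 0 (-((m:ℤ) + 1))) (2*(E - O)) := by
    have h := (hE.sub hO).mul_left 2
    have heq : (fun m : ℕ => Ikn 0 (-((m:ℤ) + 1)))
        = fun m : ℕ => 2 * ((Real.sqrt (1 + 1/(4*(m:ℝ)+1)^2) - 1)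
            - (Real.sqrt (1 + 1/(4*(m:ℝ)+3)^2) - 1)) := by
      funext m
      rw [Ikn_zero]
      have e1 : 4*((-((m:ℤ) + 1) : ℤ):ℝ)+1 = -(4*(m:ℝ)+3) := by push_cast; ring
      have e3 : 4*((-((m:ℤ) + 1) : ℤ):ℝ)+3 = -(4*(m:ℝ)+1) := by push_cast; ring
      rw [e1, e3, g_neg _ (by positivity), g_neg _ (by positivity)]
      ring
    rw [heq]
    exact h
  have hZ : HasSum (fun n : ℤ => Ikn 0 n) (2*(E - O) + 2*(E - O)) :=
    hnat.of_nat_of_neg_add_one hneg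
  have ha : HasSum (fun m : ℕ => (-1 : ℝ) ^ m *
      (Real.sqrt (1 + 1 / ((2 * m + 1 : ℝ)) ^ 2) - 1)) (E + -O) := by
    apply HasSum.even_add_odd
    · have heq : (fun k : ℕ => (-1 : ℝ) ^ (2*k) *
          (Real.sqrt (1 + 1 / ((2 * (2*k : ℕ) + 1 : ℝ)) ^ 2) - 1))
          = fun k : ℕ => Real.sqrt (1 + 1/(4*(k:ℝ)+1)^2) - 1 := by
        funext k
        have : ((-1 : ℝ)) ^ (2*k) = 1 := by
          rw [pow_mul]; norm_num
        rw [this]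
        push_cast
        ring_nf
      rw [heq]
      exact hE
    · have heq : (fun k : ℕ => (-1 : ℝ) ^ (2*k+1) *
          (Real.sqrt (1 + 1 / ((2 * (2*k+1 : ℕ) + 1 : ℝ)) ^ 2) - 1))
          = fun k : ℕ => -(Real.sqrt (1 + 1/(4*(k:ℝ)+3)^2) - 1) := by
        funext k
        have : ((-1 : ℝ)) ^ (2*k+1) = -1 := by
          rw [pow_succ, pow_mul]; norm_num
        rw [this]
        push_cast
        ring_nf
      rw [heq]
      exact hO.neg
  rw [hZ.tsum_eq, ha.tsum_eq]
  ring
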